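/- In the same OV-reduction graph G_t, if a, b ∈ A are orthogonal vectors (no index j with a[j] = b[j] = 1), then the min-distance between the copies a_1 ∈ A_1 and b_1 ∈ A_1 is at least 2t+1; hence the min-diameter of G_t is at least 2t+1. -/

import Mathlib

/-- Length (number of edges) of a shortest directed path from `a` to `b`
in the digraph with edge relation `E`; `⊤` if there is no path. -/
noncomputable def ddist {V : Type*} (E : V → V → Prop) (a b : V) : ℕ∞ :=
  sInf {n : ℕ∞ | ∃ l : List V, List.Chain E a l ∧
    (a :: l).getLast (List.cons_ne_nil a l) = b ∧ n = l.length}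

/-- The OV-reduction graph G_t: vertices are copies A_1, …, A_t of the vector
set (encoded as \`(i, a)\` with \`i : Fin t\`, \`i = 0\` meaning A_1 and
\`i = t-1\` meaning A_t) together with index vertices \`Fin d\`. Edges:
a_1 → x_j and x_j → a_t when a[j] = 1, a_i → a_{i-1} for 2 ≤ i ≤ t, and all
edges A_2 → I. -/
def ovE (t d : ℕ) {α : Type*} (vec : α → Fin d → Bool) :
    ((Fin t × α) ⊕ Fin d) → ((Fin t × α) ⊕ Fin d) → Prop :=
  fun u v => match u, v with
  | Sum.inl (i, a), Sum.inr j => (i.1 = 0 ∧ vec a j = true) ∨ i.1 = 1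
  | Sum.inr j, Sum.inl (i, a) => i.1 = t - 1 ∧ vec a j = true
  | Sum.inl (i, a), Sum.inl (i2, a2) => a = a2 ∧ i2.1 + 1 = i.1
  | _, _ => False

open Classical in
noncomputable def pot {α : Type*} (t d : ℕ) (vec : α → Fin d → Bool) (b : α) :
    ((Fin t × α) ⊕ Fin d) → ℕ
  | Sum.inr j => if vec b j = true then t else 2 * t
  | Sum.inl (i, c) =>
      if c = b then i.1
      else if i.1 = 0 then
        (if ∀ j, vec c j = true → vec b j = false then 2 * t + 1 else t + 1)
      else i.1 + t

lemma pot_inr_ge {α : Type*} (t d : ℕ) (vec : α → Fin d → Bool) (b : α) (j : Fin d) :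
    t ≤ pot t d vec b (Sum.inr j) ∧ pot t d vec b (Sum.inr j) ≤ 2 * t := by
  simp only [pot]; split <;> omega

lemma pot_edge {α : Type*} {t d : ℕ} (ht : 2 ≤ t) (vec : α → Fin d → Bool) (b : α)
    {u v : (Fin t × α) ⊕ Fin d} (h : ovE t d vec u v) :
    pot t d vec b u ≤ pot t d vec b v + 1 := by
  match u, v with
  | Sum.inl (i, c), Sum.inr j =>
    simp only [ovE] at h
    have hv := pot_inr_ge t d vec b j
    rcases h with ⟨hi0, hcj⟩ | hi1
    · by_cases hcb : c = b
      · simp only [pot, if_pos hcb]; omega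
      · simp only [pot, if_neg hcb, if_pos hi0]
        by_cases horthc : ∀ j, vec c j = true → vec b j = false
        · have hb : vec b j = false := horthc j hcj
          rw [if_pos horthc]
          simp [pot, hb]
        · rw [if_neg horthc]
          split_ifs <;> omega
    · simp only [pot] at hv ⊢
      split_ifs at hv ⊢ <;> omega
  | Sum.inr j, Sum.inl (i, c) =>
    simp only [ovE] at h
    obtain ⟨hit, hcj⟩ := h
    have hv := pot_inr_ge t d vec b j
    by_cases hcb : c = b
    · have hbj : vec b j = true := hcb ▸ hcj
      simp only [pot, if_pos hcb, if_pos hbj]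
      omega
    · have hi1 : ¬ i.1 = 0 := by omega
      simp only [pot, if_neg hcb, if_neg hi1] at hv ⊢
      split_ifs at hv ⊢ <;> omega
  | Sum.inl (i, c), Sum.inl (i2, c2) =>
    simp only [ovE] at h
    obtain ⟨hcc, hii⟩ := h
    subst hcc
    simp only [pot]
    split_ifs <;> omega
  | Sum.inr j, Sum.inr j2 => simp [ovE] at h

lemma pot_chain {α : Type*} {t d : ℕ} (ht : 2 ≤ t) (vec : α → Fin d → Bool) (b : α) :
    ∀ (l : List ((Fin t × α) ⊕ Fin d)) (u : (Fin t × α) ⊕ Fin d),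
      List.Chain (ovE t d vec) u l →
      pot t d vec b u ≤ pot t d vec b ((u :: l).getLast (List.cons_ne_nil u l)) + l.length
  | [], u, _ => by simp
  | x :: l, u, h => by
    rcases List.chain_cons.mp h with ⟨h1, h2⟩
    have ih := pot_chain ht vec b l x h2
    have he := pot_edge ht vec b h1
    rw [List.getLast_cons (List.cons_ne_nil x l)]
    simp only [List.length_cons]
    omega

lemma ddist_lb {α : Type*} (t d : ℕ) (ht : 1 < t) (vec : α → Fin d → Bool)
    (hone : ∀ c : α, ∃ j : Fin d, vec c j = true)
    (a b : α) (horth : ∀ j : Fin d, ¬ (vec a j = true ∧ vec b j = true)) :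
    ((2 * t + 1 : ℕ) : ℕ∞) ≤
      ddist (ovE t d vec) (Sum.inl (⟨0, by omega⟩, a)) (Sum.inl (⟨0, by omega⟩, b)) := by
  have horth' : ∀ j, vec a j = true → vec b j = false := by
    intro j hj
    by_contra hh
    exact horth j ⟨hj, by simpa using hh⟩
  have hab : a ≠ b := by
    obtain ⟨j, hj⟩ := hone a
    intro hh
    exact horth j ⟨hj, hh ▸ hj⟩
  apply le_sInf
  rintro n ⟨l, hc, hl, rfl⟩
  have key := pot_chain ht vec b l _ hc
  rw [hl] at key
  have h1 : pot t d vec b (Sum.inl (⟨0, by omega⟩, b) : (Fin t × α) ⊕ Fin d) = 0 := by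
    simp [pot]
  have h2 : pot t d vec b (Sum.inl (⟨0, by omega⟩, a) : (Fin t × α) ⊕ Fin d)
      = 2 * t + 1 := by
    simp only [pot, if_neg hab]
    rw [if_pos trivial, if_pos horth']
  rw [h1, h2, Nat.zero_add] at key
  exact_mod_cast key

/-- YES case: if a, b are orthogonal vectors, the min-distance between their
copies a_1, b_1 ∈ A_1 is at least 2t+1; hence the min-diameter of G_t is at
least 2t+1. -/
theorem stmt13 {α : Type*} (t d : ℕ) (ht : 2 ≤ t) (vec : α → Fin d → Bool)
    (hone : ∀ c : α, ∃ j : Fin d, vec c j = true)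
    (a b : α) (horth : ∀ j : Fin d, ¬ (vec a j = true ∧ vec b j = true)) :
    ((2 * t + 1 : ℕ) : ℕ∞) ≤
      min (ddist (ovE t d vec) (Sum.inl (⟨0, by omega⟩, a)) (Sum.inl (⟨0, by omega⟩, b)))
        (ddist (ovE t d vec) (Sum.inl (⟨0, by omega⟩, b)) (Sum.inl (⟨0, by omega⟩, a))) := by
  refine le_min (ddist_lb t d ht vec hone a b horth) (ddist_lb t d ht vec hone b a ?_)
  intro j ⟨h1, h2⟩
  exact horth j ⟨h2, h1⟩
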